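/- Fix k ∈ ℕ and φ₀ ∈ (π/2, π). There exists a constant C' = C'(k, φ₀) with the following property: for all t > 0, a > 0, C > 0, and every continuous function H on the set Γ_t = {r e^{iφ₀} : r ≥ 1/t} ∪ {r e^{-iφ₀} : r ≥ 1/t} ∪ {t^{-1}e^{iφ} : −φ₀ ≤ φ ≤ φ₀} satisfying |H(z)| ≤ C(a + |z|)^{-k-1} on Γ_t, the contour integral ∫_{Γ_t} e^{zt} H(z) dz — defined as −∫_{1/t}^∞ e^{t r e^{-iφ₀}} H(r e^{-iφ₀}) e^{-iφ₀} dr + ∫_{−φ₀}^{φ₀} e^{t t^{-1}e^{iφ}} H(t^{-1}e^{iφ}) i t^{-1} e^{iφ} dφ + ∫_{1/t}^∞ e^{t r e^{iφ₀}} H(r e^{iφ₀}) e^{iφ₀} dr — satisfies |∫_{Γ_t} e^{zt} H(z) dz| ≤ C' C t^k (1 + a t)^{-k-1}. -/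

import Mathlib

open MeasureTheory Complex Topology Filter
open scoped Real ENNReal

noncomputable section

/-- The contour `Γ_t`: rays of argument `±φ₀` from modulus `1/t` to infinity,
joined by the arc of radius `1/t`. -/
def contourSet (t φ₀ : ℝ) : Set ℂ :=
  {z | ∃ r : ℝ, 1 / t ≤ r ∧ z = (r : ℂ) * Complex.exp (Complex.I * (φ₀ : ℂ))} ∪
  {z | ∃ r : ℝ, 1 / t ≤ r ∧ z = (r : ℂ) * Complex.exp (-Complex.I * (φ₀ : ℂ))} ∪
  {z | ∃ φ : ℝ, -φ₀ ≤ φ ∧ φ ≤ φ₀ ∧ z = ((1 / t : ℝ) : ℂ) * Complex.exp (Complex.I * (φ : ℂ))}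

/-- The contour integral `∫_{Γ_t} e^{zt} H(z) dz` with the indicated parametrization. -/
def contourInt (t φ₀ : ℝ) (H : ℂ → ℂ) : ℂ :=
  -(∫ r in Set.Ici (1 / t),
      Complex.exp ((t : ℂ) * ((r : ℂ) * Complex.exp (-Complex.I * (φ₀ : ℂ)))) *
        H ((r : ℂ) * Complex.exp (-Complex.I * (φ₀ : ℂ))) *
        Complex.exp (-Complex.I * (φ₀ : ℂ))) +
  (∫ φ in -φ₀..φ₀,
      Complex.exp ((t : ℂ) * (((1 / t : ℝ) : ℂ) * Complex.exp (Complex.I * (φ : ℂ)))) *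
        H (((1 / t : ℝ) : ℂ) * Complex.exp (Complex.I * (φ : ℂ))) *
        (Complex.I * ((1 / t : ℝ) : ℂ) * Complex.exp (Complex.I * (φ : ℂ)))) +
  (∫ r in Set.Ici (1 / t),
      Complex.exp ((t : ℂ) * ((r : ℂ) * Complex.exp (Complex.I * (φ₀ : ℂ)))) *
        H ((r : ℂ) * Complex.exp (Complex.I * (φ₀ : ℂ))) *
        Complex.exp (Complex.I * (φ₀ : ℂ)))

lemma rayBound (k : ℕ) (t a C c : ℝ) (ht : 0 < t) (ha : 0 < a) (hC : 0 < C) (hc : 0 < c)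
    (w : ℂ) (hre : w.re = -c) (habsw : ‖w‖ = 1) (H : ℂ → ℂ)
    (hb : ∀ r : ℝ, 1/t ≤ r → ‖H ((r:ℂ) * w)‖ ≤ C * (a + r) ^ (-(k:ℝ)-1)) :
    ‖∫ r in Set.Ici (1/t),
        Complex.exp ((t:ℂ) * ((r:ℂ) * w)) * H ((r:ℂ) * w) * w‖ ≤
      C * (a + 1/t) ^ (-(k:ℝ)-1) / (c * t) := by
  set p : ℝ := -(k:ℝ) - 1 with hpdef
  have hp : p ≤ 0 := by simp only [hpdef]; linarith [Nat.cast_nonneg (α := ℝ) k]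
  have hat : 0 < a + 1/t := by positivity
  have hM : 0 ≤ C * (a + 1/t) ^ p := by positivity
  have hct : 0 < c * t := by positivity
  have hbnd : ∀ r ∈ Set.Ioi (1/t),
      ‖Complex.exp ((t:ℂ) * ((r:ℂ) * w)) * H ((r:ℂ) * w) * w‖ ≤
        C * (a + 1/t) ^ p * Real.exp (-(c*t) * r) := by
    intro r hr
    have hr' : 1/t ≤ r := le_of_lt hr
    have hre' : ((t:ℂ) * ((r:ℂ) * w)).re = -(c*t) * r := by
      simp [Complex.re_ofReal_mul, hre]; ring
    have h1 : ‖Complex.exp ((t:ℂ) * ((r:ℂ) * w)) * H ((r:ℂ) * w) * w‖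
        = Real.exp (-(c*t) * r) * ‖H ((r:ℂ) * w)‖ := by
      simp only [norm_mul, Complex.norm_exp, hre', habsw, mul_one]
    rw [h1]
    have h2 : ‖H ((r:ℂ) * w)‖ ≤ C * (a + 1/t) ^ p := by
      refine (hb r hr').trans ?_
      have := Real.rpow_le_rpow_of_nonpos hat (by linarith : a + 1/t ≤ a + r) hp
      nlinarith [this]
    nlinarith [Real.exp_pos (-(c*t)*r), h2, norm_nonneg (H ((r:ℂ) * w))]
  have hexp_int : IntegrableOn (fun r : ℝ => C * (a + 1/t) ^ p * Real.exp (-(c*t) * r))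
      (Set.Ioi (1/t)) :=
    (exp_neg_integrableOn_Ioi (1/t) hct).const_mul _
  have hval : (∫ r in Set.Ioi (1/t), Real.exp (-(c*t) * r)) = Real.exp (-c) / (c * t) := by
    have h := integral_comp_mul_left_Ioi (fun x => Real.exp (-x)) (1/t) hct
    simp only [smul_eq_mul] at h
    have e1 : (fun x : ℝ => Real.exp (-(c*t) * x)) = fun x : ℝ => Real.exp (-(c*t*x)) := by
      funext x; ring_nf
    have e2 : c * t * (1/t) = c := by field_simp
    rw [e1, h, e2, integral_exp_neg_Ioi]
    rw [inv_mul_eq_div]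
  calc ‖∫ r in Set.Ici (1/t), Complex.exp ((t:ℂ) * ((r:ℂ) * w)) * H ((r:ℂ) * w) * w‖
      = ‖∫ r in Set.Ioi (1/t), Complex.exp ((t:ℂ) * ((r:ℂ) * w)) * H ((r:ℂ) * w) * w‖ := by
        rw [MeasureTheory.integral_Ici_eq_integral_Ioi]
    _ ≤ ∫ r in Set.Ioi (1/t), ‖Complex.exp ((t:ℂ) * ((r:ℂ) * w)) * H ((r:ℂ) * w) * w‖ :=
        MeasureTheory.norm_integral_le_integral_norm _
    _ ≤ ∫ r in Set.Ioi (1/t), C * (a + 1/t) ^ p * Real.exp (-(c*t) * r) := by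
        refine MeasureTheory.integral_mono_of_nonneg
          (Filter.Eventually.of_forall fun r => norm_nonneg _) hexp_int ?_
        exact (MeasureTheory.ae_restrict_iff' measurableSet_Ioi).2
          (Filter.Eventually.of_forall hbnd)
    _ = C * (a + 1/t) ^ p * (Real.exp (-c) / (c * t)) := by
        rw [MeasureTheory.integral_const_mul, hval]
    _ ≤ C * (a + 1/t) ^ p * (1 / (c * t)) := by
        gcongr
        · exact Real.exp_le_one_iff.mpr (by linarith)
    _ = C * (a + 1/t) ^ p / (c * t) := by ring

/-- **Contour estimate.** If `|H(z)| ≤ C (a+|z|)^{-k-1}` on `Γ_t`, then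
`|∫_{Γ_t} e^{zt} H(z) dz| ≤ C' C t^k (1+at)^{-k-1}` with `C'` depending only on `k, φ₀`. -/
theorem statement14 (k : ℕ) (φ₀ : ℝ) (hφ₀l : Real.pi / 2 < φ₀) (hφ₀u : φ₀ < Real.pi) :
    ∃ C' : ℝ, 0 < C' ∧
      ∀ (t a C : ℝ), 0 < t → 0 < a → 0 < C →
        ∀ H : ℂ → ℂ, ContinuousOn H (contourSet t φ₀) →
          (∀ z ∈ contourSet t φ₀,
            ‖H z‖ ≤ C * (a + ‖z‖) ^ (-(k : ℝ) - 1)) →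
          ‖contourInt t φ₀ H‖ ≤ C' * C * t ^ k * (1 + a * t) ^ (-(k : ℝ) - 1) := by
  have hcos : Real.cos φ₀ < 0 :=
    Real.cos_neg_of_pi_div_two_lt_of_lt hφ₀l (by linarith [Real.pi_pos])
  set c : ℝ := -Real.cos φ₀ with hcdef
  have hc0 : 0 < c := by simp only [hcdef]; linarith
  have hφ₀pos : 0 < φ₀ := lt_trans (by positivity) hφ₀l
  refine ⟨2 * φ₀ * Real.exp 1 + 2 / c, by positivity, ?_⟩
  intro t a C ht ha hC H _Hcont Hbound
  set p : ℝ := -(k:ℝ) - 1 with hpdef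
  have hat : 0 < a + 1/t := by positivity
  have h1t : 0 < 1/t := by positivity
  -- the two unit vectors
  set wp : ℂ := Complex.exp (Complex.I * (φ₀:ℂ)) with hwp
  set wm : ℂ := Complex.exp (-Complex.I * (φ₀:ℂ)) with hwm
  have hrep : wp.re = -c := by
    rw [hwp, mul_comm, Complex.exp_ofReal_mul_I_re]; simp [hcdef]
  have hrem : wm.re = -c := by
    have : -Complex.I * (φ₀:ℂ) = ((-φ₀:ℝ):ℂ) * Complex.I := by push_cast; ring
    rw [hwm, this, Complex.exp_ofReal_mul_I_re, Real.cos_neg]; simp [hcdef]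
  have habsp : ‖wp‖ = 1 := by simp [hwp, Complex.norm_exp]
  have habsm : ‖wm‖ = 1 := by simp [hwm, Complex.norm_exp]
  -- H bounds on the rays
  have hbp : ∀ r : ℝ, 1/t ≤ r → ‖H ((r:ℂ) * wp)‖ ≤ C * (a + r) ^ p := by
    intro r hr
    have hmem : (r:ℂ) * wp ∈ contourSet t φ₀ := Or.inl (Or.inl ⟨r, hr, rfl⟩)
    have := Hbound _ hmem
    rwa [norm_mul, habsp, mul_one, Complex.norm_real, Real.norm_eq_abs, abs_of_pos (lt_of_lt_of_le h1t hr)]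
      at this
  have hbm : ∀ r : ℝ, 1/t ≤ r → ‖H ((r:ℂ) * wm)‖ ≤ C * (a + r) ^ p := by
    intro r hr
    have hmem : (r:ℂ) * wm ∈ contourSet t φ₀ := Or.inl (Or.inr ⟨r, hr, rfl⟩)
    have := Hbound _ hmem
    rwa [norm_mul, habsm, mul_one, Complex.norm_real, Real.norm_eq_abs, abs_of_pos (lt_of_lt_of_le h1t hr)]
      at this
  -- ray estimates
  have hrayp := rayBound k t a C c ht ha hC hc0 wp hrep habsp H hbp
  have hraym := rayBound k t a C c ht ha hC hc0 wm hrem habsm H hbm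
  -- arc estimate
  have harc : ‖∫ φ in -φ₀..φ₀,
      Complex.exp ((t:ℂ) * (((1/t:ℝ):ℂ) * Complex.exp (Complex.I * (φ:ℂ)))) *
        H (((1/t:ℝ):ℂ) * Complex.exp (Complex.I * (φ:ℂ))) *
        (Complex.I * ((1/t:ℝ):ℂ) * Complex.exp (Complex.I * (φ:ℂ)))‖ ≤
      (Real.exp 1 * C * (a + 1/t) ^ p * (1/t)) * |φ₀ - (-φ₀)| := by
    apply intervalIntegral.norm_integral_le_of_norm_le_const
    intro φ hφ
    rw [Set.uIoc_of_le (by linarith : -φ₀ ≤ φ₀)] at hφ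
    have hmem : ((1/t:ℝ):ℂ) * Complex.exp (Complex.I * (φ:ℂ)) ∈ contourSet t φ₀ :=
      Or.inr ⟨φ, le_of_lt hφ.1, hφ.2, rfl⟩
    have habsz : ‖((1/t:ℝ):ℂ) * Complex.exp (Complex.I * (φ:ℂ))‖ = 1/t := by
      rw [norm_mul, Complex.norm_real, Real.norm_eq_abs, abs_of_pos h1t]
      simp [Complex.norm_exp]
    have hH : ‖H (((1/t:ℝ):ℂ) * Complex.exp (Complex.I * (φ:ℂ)))‖ ≤
        C * (a + 1/t) ^ p := by
      have := Hbound _ hmem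
      rwa [habsz] at this
    have hre' : ((t:ℂ) * (((1/t:ℝ):ℂ) * Complex.exp (Complex.I * (φ:ℂ)))).re =
        t * ((1/t) * Real.cos φ) := by
      rw [Complex.re_ofReal_mul, Complex.re_ofReal_mul, mul_comm Complex.I,
        Complex.exp_ofReal_mul_I_re]
    have hexple : Real.exp (t * ((1/t) * Real.cos φ)) ≤ Real.exp 1 := by
      apply Real.exp_le_exp.mpr
      have : t * (1/t) = 1 := by field_simp
      rw [← mul_assoc, this, one_mul]
      exact Real.cos_le_one φ
    have hnorm : ‖Complex.exp ((t:ℂ) * (((1/t:ℝ):ℂ) * Complex.exp (Complex.I * (φ:ℂ)))) *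
        H (((1/t:ℝ):ℂ) * Complex.exp (Complex.I * (φ:ℂ))) *
        (Complex.I * ((1/t:ℝ):ℂ) * Complex.exp (Complex.I * (φ:ℂ)))‖ =
        Real.exp (t * ((1/t) * Real.cos φ)) *
          ‖H (((1/t:ℝ):ℂ) * Complex.exp (Complex.I * (φ:ℂ)))‖ * (1/t) := by
      simp only [norm_mul, Complex.norm_exp, hre', Complex.norm_I,
        Complex.norm_real, Real.norm_eq_abs, abs_of_pos h1t, one_mul,
        show (Complex.I * (φ:ℂ)).re = 0 from by simp, Real.exp_zero]
      ring
    rw [hnorm]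
    have h0 : (0:ℝ) ≤ ‖H (((1/t:ℝ):ℂ) * Complex.exp (Complex.I * (φ:ℂ)))‖ :=
      norm_nonneg _
    have hmm := mul_le_mul hexple hH h0 (Real.exp_pos 1).le
    nlinarith [mul_le_mul_of_nonneg_right hmm h1t.le]
  -- combine
  have key : (a + 1/t) ^ p = (1 + a*t) ^ p * t ^ (k+1) := by
    have h1 : a + 1/t = (1 + a*t)/t := by field_simp; ring
    rw [h1, Real.div_rpow (by positivity) ht.le, div_eq_mul_inv, ← Real.rpow_neg ht.le]
    congr 1
    rw [← Real.rpow_natCast t (k+1)]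
    congr 1
    push_cast [hpdef]; ring
  have htri : ‖contourInt t φ₀ H‖ ≤
      C * (a + 1/t) ^ p / (c * t) +
      (Real.exp 1 * C * (a + 1/t) ^ p * (1/t)) * |φ₀ - (-φ₀)| +
      C * (a + 1/t) ^ p / (c * t) := by
    rw [contourInt]
    refine (norm_add₃_le).trans ?_
    rw [norm_neg]
    exact add_le_add (add_le_add hraym harc) hrayp
  refine htri.trans (le_of_eq ?_)
  rw [key, pow_succ]
  rw [show |φ₀ - (-φ₀)| = 2*φ₀ by rw [sub_neg_eq_add, abs_of_pos (by linarith)]; ring]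
  field_simp
  ring
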